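/- Let b, c, v, w ∈ ℝ³ be such that v and w are linearly independent and neither b nor c lies in the plane span{v,w} (so in particular (b,v,w) ≠ 0 and (c,v,w) ≠ 0). Then a pair of vectors (v̇, ẇ) ∈ ℝ³ × ℝ³ satisfies the linear system ⟨v,v̇⟩ = 0, ⟨w,ẇ⟩ = 0, ⟨v̇,w⟩ + ⟨v,ẇ⟩ = 0, ⟨b,v̇⟩ = 0, ⟨c,ẇ⟩ = 0 if and only if there exists λ ∈ ℝ with v̇ = λ·[b,v]/(b,v,w) and ẇ = λ·[c,w]/(c,v,w). -/

import Mathlib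

open Matrix

private lemma dot3 (a b : Fin 3 → ℝ) : a ⬝ᵥ b = a 0 * b 0 + a 1 * b 1 + a 2 * b 2 := by
  simp [dotProduct, Fin.sum_univ_three]

private lemma cross0 (a b : Fin 3 → ℝ) : crossProduct a b 0 = a 1 * b 2 - a 2 * b 1 := by
  simp [cross_apply]
private lemma cross1 (a b : Fin 3 → ℝ) : crossProduct a b 1 = a 2 * b 0 - a 0 * b 2 := by
  simp [cross_apply]
private lemma cross2 (a b : Fin 3 → ℝ) : crossProduct a b 2 = a 0 * b 1 - a 1 * b 0 := by
  simp [cross_apply]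

private lemma vec_ext {a b : Fin 3 → ℝ} (h0 : a 0 = b 0) (h1 : a 1 = b 1) (h2 : a 2 = b 2) :
    a = b := by
  funext i; fin_cases i <;> assumption

private lemma exists_smul_of_cross_eq_zero {x u : Fin 3 → ℝ} (hu : u ≠ 0)
    (h : crossProduct x u = 0) : ∃ μ : ℝ, x = μ • u := by
  have h0 := congrFun h 0
  have h1 := congrFun h 1
  have h2 := congrFun h 2
  rw [cross0] at h0; rw [cross1] at h1; rw [cross2] at h2
  simp only [Pi.zero_apply] at h0 h1 h2
  obtain ⟨i, hi⟩ : ∃ i, u i ≠ 0 := by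
    by_contra hn
    push_neg at hn
    exact hu (vec_ext (hn 0) (hn 1) (hn 2))
  fin_cases i
  · have hi' : u 0 ≠ 0 := hi
    refine ⟨x 0 / u 0, vec_ext ?_ ?_ ?_⟩ <;>
      simp only [Pi.smul_apply, smul_eq_mul] <;>
      rw [div_mul_eq_mul_div, eq_div_iff hi'] <;> linarith [h0, h1, h2]
  · have hi' : u 1 ≠ 0 := hi
    refine ⟨x 1 / u 1, vec_ext ?_ ?_ ?_⟩ <;>
      simp only [Pi.smul_apply, smul_eq_mul] <;>
      rw [div_mul_eq_mul_div, eq_div_iff hi'] <;> linarith [h0, h1, h2]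
  · have hi' : u 2 ≠ 0 := hi
    refine ⟨x 2 / u 2, vec_ext ?_ ?_ ?_⟩ <;>
      simp only [Pi.smul_apply, smul_eq_mul] <;>
      rw [div_mul_eq_mul_div, eq_div_iff hi'] <;> linarith [h0, h1, h2]

private lemma dot_self_ne_zero {n : Fin 3 → ℝ} (hn : n ≠ 0) : n ⬝ᵥ n ≠ 0 := by
  rw [dot3]
  intro h
  apply hn
  refine vec_ext ?_ ?_ ?_ <;> simp only [Pi.zero_apply] <;>
    nlinarith [mul_self_nonneg (n 0), mul_self_nonneg (n 1), mul_self_nonneg (n 2)]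

private lemma mem_span_of_triple_eq_zero {b v w : Fin 3 → ℝ} (hn : crossProduct v w ≠ 0)
    (h : b ⬝ᵥ crossProduct v w = 0) : b ∈ Submodule.span ℝ ({v, w} : Set (Fin 3 → ℝ)) := by
  have hd : crossProduct v w ⬝ᵥ crossProduct v w ≠ 0 := dot_self_ne_zero hn
  rw [Submodule.mem_span_pair]
  refine ⟨(b ⬝ᵥ crossProduct w (crossProduct v w)) / (crossProduct v w ⬝ᵥ crossProduct v w),
    (v ⬝ᵥ crossProduct b (crossProduct v w)) / (crossProduct v w ⬝ᵥ crossProduct v w),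
    vec_ext ?_ ?_ ?_⟩ <;>
  · simp only [Pi.add_apply, Pi.smul_apply, smul_eq_mul]
    rw [div_mul_eq_mul_div, div_mul_eq_mul_div, ← add_div, div_eq_iff hd]
    simp only [dot3, cross0, cross1, cross2] at h ⊢
    first
      | linear_combination (v 1 * w 2 - v 2 * w 1) * h
      | linear_combination (v 2 * w 0 - v 0 * w 2) * h
      | linear_combination (v 0 * w 1 - v 1 * w 0) * h
      | linear_combination (-(v 1 * w 2 - v 2 * w 1)) * h
      | linear_combination (-(v 2 * w 0 - v 0 * w 2)) * h
      | linear_combination (-(v 0 * w 1 - v 1 * w 0)) * h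

/-- The scalar triple product `(a, b, c) = ⟨a, [b, c]⟩` in `ℝ³`. -/
noncomputable def tripleProd (a b c : Fin 3 → ℝ) : ℝ := a ⬝ᵥ crossProduct b c

/-- **Infinitesimal motions of a (2×2)-mesh.**  If `v, w` are linearly independent and
neither `b` nor `c` lies in the plane `span {v, w}`, then `(v̇, ẇ)` solves the linear
system of infinitesimal flexibility iff `v̇ = λ [b,v]/(b,v,w)` and `ẇ = λ [c,w]/(c,v,w)`
for some real `λ`. -/

private lemma dot_cross_triple (b v w : Fin 3 → ℝ) :
    crossProduct b v ⬝ᵥ w = tripleProd b v w := by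
  simp only [tripleProd, dot3, cross0, cross1, cross2]; ring

private lemma dot_cross_triple' (c v w : Fin 3 → ℝ) :
    v ⬝ᵥ crossProduct c w = - tripleProd c v w := by
  simp only [tripleProd, dot3, cross0, cross1, cross2]; ring

theorem stmt0 (b c v w : Fin 3 → ℝ)
    (hvw : LinearIndependent ℝ ![v, w])
    (hb : b ∉ Submodule.span ℝ ({v, w} : Set (Fin 3 → ℝ)))
    (hc : c ∉ Submodule.span ℝ ({v, w} : Set (Fin 3 → ℝ)))
    (vd wd : Fin 3 → ℝ) :
    (v ⬝ᵥ vd = 0 ∧ w ⬝ᵥ wd = 0 ∧ vd ⬝ᵥ w + v ⬝ᵥ wd = 0 ∧ b ⬝ᵥ vd = 0 ∧ c ⬝ᵥ wd = 0)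
    ↔ ∃ l : ℝ,
        vd = (l / tripleProd b v w) • crossProduct b v ∧
        wd = (l / tripleProd c v w) • crossProduct c w := by
  rw [linearIndependent_fin2] at hvw
  simp only [Matrix.cons_val_one, Matrix.head_cons, Matrix.cons_val_zero, ne_eq] at hvw
  obtain ⟨hw0, hvnw⟩ := hvw
  have hv0 : v ≠ 0 := by
    intro h
    exact hvnw 0 (by simp [h])
  have hn : crossProduct v w ≠ 0 := by
    intro h
    obtain ⟨μ, hμ⟩ := exists_smul_of_cross_eq_zero hw0 h
    exact hvnw μ hμ.symm
  have hTb : tripleProd b v w ≠ 0 := fun h => hb (mem_span_of_triple_eq_zero hn h)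
  have hTc : tripleProd c v w ≠ 0 := fun h => hc (mem_span_of_triple_eq_zero hn h)
  have hbv : crossProduct b v ≠ 0 := by
    intro h
    obtain ⟨μ, hμ⟩ := exists_smul_of_cross_eq_zero hv0 h
    exact hb (Submodule.mem_span_pair.mpr ⟨μ, 0, by simp [hμ]⟩)
  have hcw : crossProduct c w ≠ 0 := by
    intro h
    obtain ⟨μ, hμ⟩ := exists_smul_of_cross_eq_zero hw0 h
    exact hc (Submodule.mem_span_pair.mpr ⟨0, μ, by simp [hμ]⟩)
  constructor
  · rintro ⟨e1, e2, e3, e4, e5⟩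
    have hc1 : crossProduct vd (crossProduct b v) = 0 := by
      rw [dot3] at e1 e4
      refine vec_ext ?_ ?_ ?_ <;>
        simp only [cross0, cross1, cross2, Pi.zero_apply] <;>
        first
          | linear_combination b 0 * e1 - v 0 * e4
          | linear_combination b 1 * e1 - v 1 * e4
          | linear_combination b 2 * e1 - v 2 * e4
    have hc2 : crossProduct wd (crossProduct c w) = 0 := by
      rw [dot3] at e2 e5
      refine vec_ext ?_ ?_ ?_ <;>
        simp only [cross0, cross1, cross2, Pi.zero_apply] <;>
        first
          | linear_combination c 0 * e2 - w 0 * e5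
          | linear_combination c 1 * e2 - w 1 * e5
          | linear_combination c 2 * e2 - w 2 * e5
    obtain ⟨μ, hμ⟩ := exists_smul_of_cross_eq_zero hbv hc1
    obtain ⟨ν, hν⟩ := exists_smul_of_cross_eq_zero hcw hc2
    refine ⟨μ * tripleProd b v w, ?_, ?_⟩
    · rw [hμ]
      congr 1
      field_simp
    · rw [hν]
      congr 1
      rw [hμ, hν] at e3
      rw [smul_dotProduct, dotProduct_smul, dot_cross_triple,
        dot_cross_triple'] at e3
      simp only [smul_eq_mul] at e3
      rw [eq_div_iff hTc]
      linear_combination (-1 : ℝ) * e3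
  · rintro ⟨l, rfl, rfl⟩
    refine ⟨?_, ?_, ?_, ?_, ?_⟩
    · simp
    · simp
    · rw [smul_dotProduct, dotProduct_smul, dot_cross_triple,
        dot_cross_triple']
      simp only [smul_eq_mul]
      field_simp
      ring
    · simp
    · simp
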